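/- Let F : E × E → E be a coordinate retraction family that is C² on a neighborhood of (0, 0). Then there exist constants C > 0 and ε > 0 such that for all u, v ∈ E with ‖u‖ ≤ ε, ‖v‖ ≤ ε and F(−u, v) = u, one has ‖v − 2u‖ ≤ C‖u‖². (That is, the tangent vector v obtained by pulling q_y back to the tangent space at q_x via the inverse retraction satisfies v = 2u + O(‖u‖²).) -/

import Mathlib

set_option maxHeartbeats 2000000 in
/-- **The pulled-back tangent vector `v = R⁻¹_{q_x}(q_y)` satisfies `v = 2u + O(‖u‖²)`.**
In Riemann normal coordinates centred at the geodesic midpoint, the configurations `q_x, q_y`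
have coordinates `-u, u`.  If `F` is a coordinate retraction family that is `C²` near `(0, 0)`
and `F (-u, v) = u` (i.e. `v` is the inverse retraction of `q_y` at `q_x`), then
`‖v - 2u‖ ≤ C ‖u‖²` for all small `u, v`. -/
theorem inverse_retraction_at_endpoint_second_order
    {E : Type*} [NormedAddCommGroup E] [InnerProductSpace ℝ E] [FiniteDimensional ℝ E]
    (F : E × E → E)
    (hF : ContDiffAt ℝ 2 F (0, 0))
    (hF0 : ∀ᶠ z in nhds (0 : E), F (z, 0) = z)
    (hFid : fderiv ℝ (fun ζ : E => F (0, ζ)) 0 = ContinuousLinearMap.id ℝ E) :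
    ∃ C > 0, ∃ ε > 0, ∀ u v : E, ‖u‖ ≤ ε → ‖v‖ ≤ ε → F (-u, v) = u →
      ‖v - (2 : ℝ) • u‖ ≤ C * ‖u‖ ^ 2 := by
  classical
  -- Lipschitz bound for the derivative near (0,0)
  have hF1 : ContDiffAt ℝ 1 (fderiv ℝ F) (0, 0) := hF.fderiv_right (by norm_num)
  obtain ⟨K, t, ht, hlip⟩ := hF1.exists_lipschitzOnWith
  obtain ⟨δ₁, hδ₁pos, hδ₁⟩ := Metric.mem_nhds_iff.mp ht
  -- differentiability near (0,0)
  have hdiffev : ∀ᶠ x in nhds ((0 : E), (0 : E)), DifferentiableAt ℝ F x :=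
    (hF.eventually (by norm_num)).mono fun x hx => hx.differentiableAt (by norm_num)
  obtain ⟨δ₂, hδ₂pos, hδ₂⟩ := Metric.mem_nhds_iff.mp hdiffev
  obtain ⟨δ₀, hδ₀pos, hδ₀⟩ := Metric.mem_nhds_iff.mp hF0
  set A := fderiv ℝ F (0, 0) with hA
  -- `A (0, v) = v`
  have hdiff00 : DifferentiableAt ℝ F ((0 : E), (0 : E)) :=
    hδ₂ (Metric.mem_ball_self hδ₂pos)
  have hAv : ∀ v : E, A (0, v) = v := by
    intro v
    have hinr : HasFDerivAt (fun ζ : E => ((0 : E), ζ))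
        (ContinuousLinearMap.inr ℝ E E) 0 := (ContinuousLinearMap.inr ℝ E E).hasFDerivAt
    have hcomp : HasFDerivAt (fun ζ : E => F (0, ζ))
        (A.comp (ContinuousLinearMap.inr ℝ E E)) 0 := by
      have := hdiff00.hasFDerivAt.comp (0 : E) hinr
      exact this
    have h1 : A.comp (ContinuousLinearMap.inr ℝ E E) = ContinuousLinearMap.id ℝ E := by
      rw [← hcomp.fderiv]; exact hFid
    have := congrArg (fun L : E →L[ℝ] E => L v) h1
    simpa using this
  set δ : ℝ := min δ₀ (min δ₁ δ₂) with hδdef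
  have hδpos : 0 < δ := lt_min hδ₀pos (lt_min hδ₁pos hδ₂pos)
  have hδδ₀ : δ ≤ δ₀ := min_le_left _ _
  have hδδ₁ : δ ≤ δ₁ := (min_le_right _ _).trans (min_le_left _ _)
  have hδδ₂ : δ ≤ δ₂ := (min_le_right _ _).trans (min_le_right _ _)
  set ε : ℝ := min (δ / 2) (1 / (4 * ((K : ℝ) + 1))) with hεdef
  have hKpos : (0 : ℝ) < (K : ℝ) + 1 := by positivity
  have hεpos : 0 < ε := lt_min (by linarith) (by positivity)
  have hεδ : ε < δ := lt_of_le_of_lt (min_le_left _ _) (by linarith)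
  have hKε : (K : ℝ) * ε ≤ 1 / 4 := by
    have h1 : ε ≤ 1 / (4 * ((K : ℝ) + 1)) := min_le_right _ _
    have h2 : (K : ℝ) * ε ≤ (K : ℝ) * (1 / (4 * ((K : ℝ) + 1))) :=
      mul_le_mul_of_nonneg_left h1 K.coe_nonneg
    have h3 : (K : ℝ) * (1 / (4 * ((K : ℝ) + 1))) ≤ 1 / 4 := by
      rw [mul_one_div, div_le_div_iff₀ (by positivity) (by norm_num : (0:ℝ) < 4)]
      nlinarith [K.coe_nonneg]
    linarith
  refine ⟨9 * (K : ℝ) + 1, by positivity, ε, hεpos, fun u v hu hv hFuv => ?_⟩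
  set r : ℝ := max ‖u‖ ‖v‖ with hrdef
  have hrε : r ≤ ε := max_le hu hv
  have hrδ : r < δ := lt_of_le_of_lt hrε hεδ
  have hsub : Metric.closedBall ((0 : E), (0 : E)) r ⊆ Metric.ball ((0 : E), (0 : E)) δ :=
    Metric.closedBall_subset_ball hrδ
  -- bound on the derivative on the closed ball of radius r
  have hbound : ∀ x ∈ Metric.closedBall ((0 : E), (0 : E)) r,
      ‖fderiv ℝ F x - A‖ ≤ (K : ℝ) * r := by
    intro x hx
    have hxt : x ∈ t := hδ₁ (Metric.ball_subset_ball hδδ₁ (hsub hx))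
    have h0t : ((0 : E), (0 : E)) ∈ t := hδ₁ (Metric.mem_ball_self hδ₁pos)
    have hd : dist (fderiv ℝ F x) (fderiv ℝ F ((0 : E), (0 : E))) ≤ (K : ℝ) * dist x ((0 : E), (0 : E)) :=
      hlip.dist_le_mul x hxt _ h0t
    have hxr : dist x ((0 : E), (0 : E)) ≤ r := Metric.mem_closedBall.mp hx
    calc ‖fderiv ℝ F x - A‖ = dist (fderiv ℝ F x) (fderiv ℝ F ((0 : E), (0 : E))) := by
          exact (dist_eq_norm (fderiv ℝ F x) A).symm
      _ ≤ (K : ℝ) * dist x ((0 : E), (0 : E)) := hd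
      _ ≤ (K : ℝ) * r := by
          exact mul_le_mul_of_nonneg_left hxr K.coe_nonneg
  -- differentiability on the closed ball
  have hdiffs : ∀ x ∈ Metric.closedBall ((0 : E), (0 : E)) r, DifferentiableAt ℝ F x :=
    fun x hx => hδ₂ (Metric.ball_subset_ball hδδ₂ (hsub hx))
  -- membership of the two endpoints
  have hrnonneg : (0 : ℝ) ≤ r := le_max_iff.mpr (Or.inl (norm_nonneg _))
  have hx1 : ((-u, (0 : E)) : E × E) ∈ Metric.closedBall ((0 : E), (0 : E)) r := by
    rw [Metric.mem_closedBall, Prod.dist_eq]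
    simp only [dist_zero_right, norm_neg, norm_zero]
    exact max_le (le_max_left _ _) hrnonneg
  have hx2 : ((-u, v) : E × E) ∈ Metric.closedBall ((0 : E), (0 : E)) r := by
    rw [Metric.mem_closedBall, Prod.dist_eq]
    simp only [dist_zero_right, norm_neg]
    exact max_le (le_max_left _ _) (le_max_right _ _)
  -- mean value inequality
  have hmv := (convex_closedBall ((0 : E), (0 : E)) r).norm_image_sub_le_of_norm_fderiv_le'
    hdiffs hbound hx1 hx2
  -- compute the pieces
  have hFu0 : F (-u, 0) = -u := by
    have huδ₀ : ‖u‖ < δ₀ := lt_of_le_of_lt hu (hεδ.trans_le hδδ₀)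
    exact hδ₀ (show (-u) ∈ Metric.ball (0 : E) δ₀ by
      simpa [Metric.mem_ball, dist_zero_right] using huδ₀)
  have hdiffvec : ((-u, v) : E × E) - (-u, (0:E)) = ((0 : E), v) := by
    simp [Prod.ext_iff]
  have hnormv : ‖((0 : E), v)‖ = ‖v‖ := by
    simp [Prod.norm_def]
  rw [hFuv, hFu0, hdiffvec, hAv v, hnormv] at hmv
  -- hmv : ‖u - -u - v‖ ≤ K * r * ‖v‖
  have hkey : ‖v - (2 : ℝ) • u‖ ≤ (K : ℝ) * r * ‖v‖ := by
    have : u - -u - v = -(v - (2:ℝ) • u) := by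
      rw [two_smul]; abel
    rw [this, norm_neg] at hmv
    exact hmv
  -- bootstrap: ‖v‖ ≤ 3 ‖u‖
  have hKr : (K : ℝ) * r ≤ 1 / 4 := by
    have := mul_le_mul_of_nonneg_left hrε K.coe_nonneg
    linarith
  have hv3 : ‖v‖ ≤ 3 * ‖u‖ := by
    have h1 : ‖v‖ ≤ ‖v - (2:ℝ) • u‖ + ‖(2:ℝ) • u‖ := by
      calc ‖v‖ = ‖(v - (2:ℝ) • u) + (2:ℝ) • u‖ := by congr 1; abel
        _ ≤ ‖v - (2:ℝ) • u‖ + ‖(2:ℝ) • u‖ := norm_add_le _ _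
    have h2 : ‖(2:ℝ) • u‖ = 2 * ‖u‖ := by
      rw [norm_smul]; norm_num
    rw [h2] at h1
    have h3 : (K : ℝ) * r * ‖v‖ ≤ (1/4) * ‖v‖ :=
      mul_le_mul_of_nonneg_right hKr (norm_nonneg _)
    linarith [hkey, h1, h2.le, h3, norm_nonneg u]
  have hr3 : r ≤ 3 * ‖u‖ := by
    rw [hrdef]
    apply max_le _ hv3
    linarith [norm_nonneg u]
  calc ‖v - (2 : ℝ) • u‖ ≤ (K : ℝ) * r * ‖v‖ := hkey
    _ ≤ (K : ℝ) * (3 * ‖u‖) * (3 * ‖u‖) := by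
        have h1 : (K : ℝ) * r ≤ (K : ℝ) * (3 * ‖u‖) :=
          mul_le_mul_of_nonneg_left hr3 K.coe_nonneg
        have h2 : (0 : ℝ) ≤ (K : ℝ) * (3 * ‖u‖) := by positivity
        exact mul_le_mul h1 hv3 (norm_nonneg _) h2
    _ = 9 * (K : ℝ) * ‖u‖ ^ 2 := by ring
    _ ≤ (9 * (K : ℝ) + 1) * ‖u‖ ^ 2 := by
        have h4 : (0:ℝ) ≤ ‖u‖ ^ 2 := sq_nonneg _
        nlinarith
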